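/- In the rewrite game over {a,b} with rules a^2 → ε and b → ε, a word u has Grundy value 0 if and only if (|u|_a − 2|u|_b) mod 4 ∈ {0,1}, and Grundy value 1 if and only if (|u|_a − 2|u|_b) mod 4 ∈ {2,3}. In particular the Grundy function of this game takes only values 0 and 1. -/

import Mathlib

inductive AB | a | b
deriving DecidableEq

/-- One move of the game `{a² → ε, b → ε}`. -/
def Step (w w' : List AB) : Prop :=
  ∃ x y : List AB, w' = x ++ y ∧
    (w = x ++ [AB.a, AB.a] ++ y ∨ w = x ++ [AB.b] ++ y)

/-- The minimum excluded value of a set of naturals. -/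
noncomputable def mex (S : Set ℕ) : ℕ := sInf {n | n ∉ S}

/-- `g` is the Grundy function of the game with moves `step`. -/
def IsGrundy (step : List AB → List AB → Prop) (g : List AB → ℕ) : Prop :=
  ∀ w, g w = mex (g '' {w' | step w w'})

/-- `S(u) = |u|_a − 2|u|_b` computed modulo 4. -/
def S (u : List AB) : ZMod 4 := (u.count AB.a : ZMod 4) - 2 * (u.count AB.b : ZMod 4)

lemma S_append (x y : List AB) : S (x ++ y) = S x + S y := by
  simp only [S, List.count_append]
  push_cast
  ring

lemma step_S {w w' : List AB} (h : Step w w') : S w' = S w + 2 := by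
  have h22 : (2 : ZMod 4) + 2 = 0 := by decide
  obtain ⟨x, y, rfl, rfl | rfl⟩ := h <;> simp only [S_append] <;>
    [rw [show S [AB.a, AB.a] = 2 from by decide];
     rw [show S [AB.b] = 2 from by decide]] <;>
    rw [show S x + 2 + S y + 2 = S x + S y + (2 + 2) from by ring, h22, add_zero]

lemma step_length {w w' : List AB} (h : Step w w') : w'.length < w.length := by
  obtain ⟨x, y, rfl, rfl | rfl⟩ := h <;> simp +arith +decide

lemma exists_move (u : List AB) : u = [] ∨ u = [AB.a] ∨ ∃ v, Step u v := by
  match u with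
  | [] => exact Or.inl rfl
  | [AB.a] => exact Or.inr (Or.inl rfl)
  | AB.b :: t => exact Or.inr (Or.inr ⟨t, [], t, rfl, Or.inr rfl⟩)
  | AB.a :: AB.a :: t => exact Or.inr (Or.inr ⟨t, [], t, rfl, Or.inl rfl⟩)
  | AB.a :: AB.b :: t =>
      exact Or.inr (Or.inr ⟨AB.a :: t, [AB.a], t, rfl, Or.inr rfl⟩)

lemma zmod4_cases : ∀ x : ZMod 4, x = 0 ∨ x = 1 ∨ x = 2 ∨ x = 3 := by decide

lemma key (g : List AB → ℕ) (hg : IsGrundy Step g) :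
    ∀ u : List AB, g u = if S u = 0 ∨ S u = 1 then 0 else 1 := by
  suffices H : ∀ n (u : List AB), u.length = n →
      g u = if S u = 0 ∨ S u = 1 then 0 else 1 by
    intro u; exact H u.length u rfl
  intro n
  induction n using Nat.strong_induction_on with
  | _ n ih =>
    intro u hu
    have IH : ∀ v : List AB, Step u v → g v = if S v = 0 ∨ S v = 1 then 0 else 1 := by
      intro v hv
      exact ih v.length (hu ▸ step_length hv) v rfl
    rw [hg u]
    by_cases h01 : S u = 0 ∨ S u = 1
    · rw [if_pos h01]
      -- every move value is 1, so 0 is excluded value; mex = 0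
      have h0 : (0 : ℕ) ∈ {n | n ∉ g '' {w' | Step u w'}} := by
        rintro ⟨v, hv, hgv⟩
        rw [IH v hv] at hgv
        have hSv := step_S hv
        rcases h01 with h | h <;> rw [h] at hSv <;>
          · rw [if_neg (by rw [hSv]; decide)] at hgv; exact one_ne_zero hgv
      exact Nat.sInf_eq_zero.mpr (Or.inl h0)
    · rw [if_neg h01]
      have h23 : S u = 2 ∨ S u = 3 := by
        rcases zmod4_cases (S u) with h | h | h | h <;> tauto
      -- every move value is 0
      have hall : ∀ v, Step u v → g v = 0 := by
        intro v hv
        rw [IH v hv]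
        have hSv := step_S hv
        rcases h23 with h | h <;> rw [h] at hSv <;>
          exact if_pos (by rw [hSv]; decide)
      -- there exists a move
      have hne : ∃ v, Step u v := by
        rcases exists_move u with rfl | rfl | h
        · exact absurd (Or.inl (by decide)) h01
        · exact absurd (Or.inr (by decide)) h01
        · exact h
      obtain ⟨v, hv⟩ := hne
      have h0mem : (0 : ℕ) ∈ g '' {w' | Step u w'} := ⟨v, hv, hall v hv⟩
      have h1mem : (1 : ℕ) ∈ {n | n ∉ g '' {w' | Step u w'}} := by
        rintro ⟨w, hw, hgw⟩
        rw [hall w hw] at hgw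
        exact one_ne_zero hgw.symm
      refine le_antisymm (Nat.sInf_le h1mem) ?_
      refine Nat.one_le_iff_ne_zero.mpr fun h0 => ?_
      rcases Nat.sInf_eq_zero.mp h0 with h | h
      · exact h h0mem
      · exact (Set.eq_empty_iff_forall_notMem.mp h) 1 h1mem

theorem stmt8 (g : List AB → ℕ) (hg : IsGrundy Step g) :
    (∀ u : List AB, (g u = 0 ↔ S u ∈ ({0, 1} : Set (ZMod 4)))) ∧
    (∀ u : List AB, (g u = 1 ↔ S u ∈ ({2, 3} : Set (ZMod 4)))) ∧
    (∀ u : List AB, g u ≤ 1) := by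
  have k := key g hg
  refine ⟨fun u => ?_, fun u => ?_, fun u => ?_⟩
  · rw [k u]
    by_cases h : S u = 0 ∨ S u = 1
    · simp [h, Set.mem_insert_iff]
    · simp only [if_neg h]
      simp only [Set.mem_insert_iff, Set.mem_singleton_iff]
      constructor
      · intro h1; exact absurd h1 one_ne_zero
      · intro h1; exact absurd h1 h
  · rw [k u]
    by_cases h : S u = 0 ∨ S u = 1
    · simp only [if_pos h, Set.mem_insert_iff, Set.mem_singleton_iff]
      constructor
      · intro h0; exact absurd h0.symm one_ne_zero
      · rintro (h2 | h2) <;> rcases h with h | h <;> rw [h] at h2 <;>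
          exact absurd h2 (by decide)
    · have h23 : S u = 2 ∨ S u = 3 := by
        rcases zmod4_cases (S u) with h' | h' | h' | h' <;> tauto
      simp [h, Set.mem_insert_iff]
      tauto
  · rw [k u]; split <;> omega
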